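/- For all n ≥ k ≥ 3 and a ≥ 1, there exists a line segment X ⊆ ℝ^n with ‖X‖_∞ = 1 such that for every c > 0 the exact exponential-loss minimizer x_{c,0} over X satisfies σ_k(x*) − σ_k(x_{c,0}) ≥ (1/3)·min{1, a/c}, where x* is the lexicographic maximum of X. -/

import Mathlib

noncomputable def sortedComp {n : ℕ} (x : Fin n → ℝ) (k : Fin n) : ℝ :=
  x (Tuple.sort x k)

def IsLexMax {n : ℕ} (X : Set (Fin n → ℝ)) (y : Fin n → ℝ) : Prop :=
  y ∈ X ∧ ∀ x ∈ X, x = y ∨ ∃ i : Fin n,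
    (∀ j : Fin n, j < i → sortedComp y j = sortedComp x j) ∧
    sortedComp x i < sortedComp y i

/-- The exponential loss. -/
noncomputable def expLoss {n : ℕ} (c : ℝ) (x : Fin n → ℝ) : ℝ :=
  ∑ i, Real.exp (-c * x i)

/-- The sup of the sup-norms of elements of X, i.e. ‖X‖_∞. -/
noncomputable def supNorm {n : ℕ} (X : Set (Fin n → ℝ)) : ℝ :=
  sSup ((fun x : Fin n → ℝ => ‖x‖) '' X)

lemma sortedComp_of_monotone {n : ℕ} {x : Fin n → ℝ} (h : Monotone x) (j : Fin n) :
    sortedComp x j = x j := by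
  unfold sortedComp
  rw [Tuple.sort_eq_refl_iff_monotone.2 h]
  rfl

noncomputable def myPt (n k : ℕ) (ε t : ℝ) : Fin n → ℝ := fun i =>
  if (i : ℕ) = 0 then ε * (1 - t)
  else if (i : ℕ) < k - 2 then ε
  else if (i : ℕ) = k - 2 then ε + t * (2/3 - ε)
  else if (i : ℕ) = k - 1 then 1 - t / 3
  else 1

lemma myPt_affine (n k : ℕ) (ε t : ℝ) :
    (1 - t) • myPt n k ε 0 + t • myPt n k ε 1 = myPt n k ε t := by
  funext i
  simp only [myPt, Pi.add_apply, Pi.smul_apply, smul_eq_mul]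
  split_ifs <;> ring

lemma myPt_mem_segment (n k : ℕ) (ε : ℝ) {t : ℝ} (h0 : 0 ≤ t) (h1 : t ≤ 1) :
    myPt n k ε t ∈ segment ℝ (myPt n k ε 0) (myPt n k ε 1) := by
  rw [segment_eq_image]
  exact ⟨t, ⟨h0, h1⟩, by simpa using myPt_affine n k ε t⟩

lemma mem_segment_iff (n k : ℕ) (ε : ℝ) (x : Fin n → ℝ) :
    x ∈ segment ℝ (myPt n k ε 0) (myPt n k ε 1) ↔
      ∃ t, 0 ≤ t ∧ t ≤ 1 ∧ x = myPt n k ε t := by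
  rw [segment_eq_image]
  constructor
  · rintro ⟨t, ⟨h0, h1⟩, h⟩
    exact ⟨t, h0, h1, by rw [← h]; simpa using myPt_affine n k ε t⟩
  · rintro ⟨t, h0, h1, rfl⟩
    exact ⟨t, ⟨h0, h1⟩, by simpa using myPt_affine n k ε t⟩

set_option maxHeartbeats 1000000 in
lemma myPt_monotone {n k : ℕ} (hk3 : 3 ≤ k) {ε t : ℝ} (hε : 0 < ε) (hε8 : ε ≤ 1/8)
    (ht0 : 0 ≤ t) (ht1 : t ≤ 1) : Monotone (myPt n k ε t) := by
  intro i j hij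
  rw [Fin.le_def] at hij
  simp only [myPt]
  split_ifs <;> first
    | (exfalso; omega)
    | nlinarith [mul_nonneg ht0 (by nlinarith : (0:ℝ) ≤ 2/3 - ε)]

lemma myPt_apply_zero (n k : ℕ) (ε t : ℝ) (h : 0 < n) :
    myPt n k ε t ⟨0, h⟩ = ε * (1 - t) := by
  simp [myPt]

lemma myPt_apply_km2 (n k : ℕ) (ε t : ℝ) (hk3 : 3 ≤ k) (h : k - 2 < n) :
    myPt n k ε t ⟨k - 2, h⟩ = ε + t * (2/3 - ε) := by
  simp only [myPt]
  rw [if_neg (by omega), if_neg (by omega)]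
  simp

lemma myPt_apply_km1 (n k : ℕ) (ε t : ℝ) (hk3 : 3 ≤ k) (h : k - 1 < n) :
    myPt n k ε t ⟨k - 1, h⟩ = 1 - t / 3 := by
  simp only [myPt]
  rw [if_neg (by omega), if_neg (by omega), if_neg (by omega)]
  simp
noncomputable def myPhi (c ε t : ℝ) : ℝ :=
  Real.exp (-c * (ε * (1 - t))) + Real.exp (-c * (ε + t * (2/3 - ε)))
    + Real.exp (-c * (1 - t / 3))

lemma expLoss_sub (n k : ℕ) (hk3 : 3 ≤ k) (hkn : k ≤ n) (c ε t s : ℝ) :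
    expLoss c (myPt n k ε t) - expLoss c (myPt n k ε s) = myPhi c ε t - myPhi c ε s := by
  classical
  have h0 : (0 : ℕ) < n := by omega
  have h2 : k - 2 < n := by omega
  have h1 : k - 1 < n := by omega
  set i0 : Fin n := ⟨0, h0⟩
  set i2 : Fin n := ⟨k - 2, h2⟩
  set i1 : Fin n := ⟨k - 1, h1⟩
  have hne02 : i0 ≠ i2 := by simp only [i0, i2, ne_eq, Fin.mk.injEq]; omega
  have hne01 : i0 ≠ i1 := by simp only [i0, i1, ne_eq, Fin.mk.injEq]; omega
  have hne21 : i2 ≠ i1 := by simp only [i2, i1, ne_eq, Fin.mk.injEq]; omega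
  have key : ∀ i : Fin n, i ∉ ({i0, i2, i1} : Finset (Fin n)) →
      Real.exp (-c * myPt n k ε t i) - Real.exp (-c * myPt n k ε s i) = 0 := by
    intro i hi
    simp only [Finset.mem_insert, Finset.mem_singleton, i0, i2, i1, Fin.ext_iff] at hi
    push_neg at hi
    obtain ⟨hi0, hi2, hi1⟩ := hi
    have : myPt n k ε t i = myPt n k ε s i := by
      simp only [myPt]
      rw [if_neg hi0, if_neg hi0]
      split_ifs <;> first | rfl | omega
    rw [this, sub_self]
  have hsum : expLoss c (myPt n k ε t) - expLoss c (myPt n k ε s)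
      = ∑ i ∈ ({i0, i2, i1} : Finset (Fin n)),
          (Real.exp (-c * myPt n k ε t i) - Real.exp (-c * myPt n k ε s i)) := by
    rw [expLoss, expLoss, ← Finset.sum_sub_distrib]
    exact (Finset.sum_subset (Finset.subset_univ _) (fun i _ hi => key i hi)).symm
  rw [hsum, Finset.sum_insert (by simp [hne02, hne01]),
    Finset.sum_insert (by simp [hne21]), Finset.sum_singleton]
  simp only [i0, i2, i1, myPt_apply_zero n k ε _ h0, myPt_apply_km2 n k ε _ hk3 h2,
    myPt_apply_km1 n k ε _ hk3 h1, myPhi]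
  ring

lemma myPhi_hasDerivAt (c ε t : ℝ) :
    HasDerivAt (myPhi c ε)
      (Real.exp (-c * (ε * (1 - t))) * (c * ε)
        + Real.exp (-c * (ε + t * (2/3 - ε))) * (-(c * (2/3 - ε)))
        + Real.exp (-c * (1 - t / 3)) * (c / 3)) t := by
  have h1 : HasDerivAt (fun x : ℝ => -c * (ε * (1 - x))) (c * ε) t := by
    have := (((hasDerivAt_id t).const_sub 1).const_mul ε).const_mul (-c)
    exact this.congr_deriv (by ring)
  have h2 : HasDerivAt (fun x : ℝ => -c * (ε + x * (2/3 - ε))) (-(c * (2/3 - ε))) t := by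
    have := (((hasDerivAt_id t).mul_const (2/3 - ε)).const_add ε).const_mul (-c)
    exact this.congr_deriv (by ring)
  have h3 : HasDerivAt (fun x : ℝ => -c * (1 - x / 3)) (c / 3) t := by
    have := (((hasDerivAt_id t).div_const 3).const_sub 1).const_mul (-c)
    exact this.congr_deriv (by ring)
  exact (h1.exp.add h2.exp).add h3.exp

lemma myPhi_deriv_neg {a c ε x : ℝ} (hc : 0 < c) (ha : 1 ≤ a)
    (hεdef : ε = (1/8) * Real.exp (-(2 * a / 3)))
    (hx0 : 0 ≤ x) (hx1 : x ≤ 1) (hcx : c * x ≤ a) :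
    Real.exp (-c * (ε * (1 - x))) * (c * ε)
        + Real.exp (-c * (ε + x * (2/3 - ε))) * (-(c * (2/3 - ε)))
        + Real.exp (-c * (1 - x / 3)) * (c / 3) < 0 := by
  have hε : 0 < ε := by
    rw [hεdef]; positivity
  have hε8 : ε ≤ 1/8 := by
    rw [hεdef]
    nlinarith [Real.exp_le_one_iff.2 (by nlinarith : -(2*a/3) ≤ 0), Real.exp_pos (-(2*a/3))]
  set E := Real.exp (-c * (ε + x * (2/3 - ε))) with hE
  have hEpos : 0 < E := Real.exp_pos _
  have key1 : Real.exp (-c * (ε * (1 - x))) = Real.exp (2 * c / 3 * x) * E := by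
    rw [hE, ← Real.exp_add]
    congr 1
    ring
  have key3 : Real.exp (-c * (1 - x / 3)) = Real.exp (-(c * (1 - ε) * (1 - x))) * E := by
    rw [hE, ← Real.exp_add]
    congr 1
    ring
  have b1 : Real.exp (2 * c / 3 * x) ≤ Real.exp (2 * a / 3) := by
    apply Real.exp_le_exp.2
    nlinarith
  have b1' : ε * Real.exp (2 * a / 3) = 1/8 := by
    rw [hεdef, mul_assoc, ← Real.exp_add]
    norm_num
  have b3 : Real.exp (-(c * (1 - ε) * (1 - x))) ≤ 1 := by
    apply Real.exp_le_one_iff.2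
    have : 0 ≤ c * (1 - ε) * (1 - x) :=
      mul_nonneg (mul_nonneg hc.le (by linarith)) (by linarith)
    linarith
  rw [key1, key3]
  have e1pos : 0 < Real.exp (2 * c / 3 * x) := Real.exp_pos _
  have e3pos : 0 < Real.exp (-(c * (1 - ε) * (1 - x))) := Real.exp_pos _
  have hb : ε * Real.exp (2 * c / 3 * x) ≤ 1/8 := by
    calc ε * Real.exp (2 * c / 3 * x) ≤ ε * Real.exp (2 * a / 3) := by nlinarith
    _ = 1/8 := b1'
  nlinarith [mul_pos hc hEpos, mul_le_mul_of_nonneg_right hb (le_of_lt (mul_pos hc hEpos)),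
    mul_le_mul_of_nonneg_right b3 (le_of_lt (mul_pos (by linarith : (0:ℝ) < c/3) hEpos))]

lemma myPhi_strictAntiOn {a c ε m : ℝ} (hc : 0 < c) (ha : 1 ≤ a)
    (hεdef : ε = (1/8) * Real.exp (-(2 * a / 3)))
    (hm1 : m ≤ 1) (hcm : c * m ≤ a) :
    StrictAntiOn (myPhi c ε) (Set.Icc 0 m) := by
  apply strictAntiOn_of_deriv_neg (convex_Icc 0 m)
  · exact fun x _ => (myPhi_hasDerivAt c ε x).continuousAt.continuousWithinAt
  · intro x hx
    rw [interior_Icc] at hx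
    rw [(myPhi_hasDerivAt c ε x).deriv]
    refine myPhi_deriv_neg hc ha hεdef hx.1.le (hx.2.le.trans hm1) ?_
    have := mul_le_mul_of_nonneg_left hx.2.le hc.le
    linarith
set_option maxHeartbeats 1000000 in
theorem kth_component_slow_convergence {n k : ℕ} (hk3 : 3 ≤ k) (hkn : k ≤ n)
    (a : ℝ) (ha : 1 ≤ a) :
    ∃ X : Set (Fin n → ℝ),
      (∃ u v : Fin n → ℝ, X = segment ℝ u v) ∧
      supNorm X = 1 ∧
      ∀ c : ℝ, 0 < c → ∀ xstar, IsLexMax X xstar →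
        ∀ xc ∈ X, (∀ x ∈ X, expLoss c xc ≤ expLoss c x) →
          (1 / 3 : ℝ) * min 1 (a / c) ≤
            sortedComp xstar ⟨k - 1, by omega⟩ - sortedComp xc ⟨k - 1, by omega⟩ := by
  have hεdef : (1/8 : ℝ) * Real.exp (-(2 * a / 3)) = (1/8) * Real.exp (-(2 * a / 3)) := rfl
  set ε : ℝ := (1/8) * Real.exp (-(2 * a / 3)) with hεd
  have hε : 0 < ε := by rw [hεd]; positivity
  have hε8 : ε ≤ 1/8 := by
    rw [hεd]
    nlinarith [Real.exp_le_one_iff.2 (by nlinarith : -(2*a/3) ≤ 0), Real.exp_pos (-(2*a/3))]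
  have h1n : k - 1 < n := by omega
  have h0n : 0 < n := by omega
  refine ⟨segment ℝ (myPt n k ε 0) (myPt n k ε 1), ⟨_, _, rfl⟩, ?_, ?_⟩
  · -- supNorm = 1
    have hub : ∀ y ∈ (fun x : Fin n → ℝ => ‖x‖) '' segment ℝ (myPt n k ε 0) (myPt n k ε 1),
        y ≤ 1 := by
      rintro y ⟨x, hx, rfl⟩
      rw [mem_segment_iff] at hx
      obtain ⟨t, ht0, ht1, rfl⟩ := hx
      rw [pi_norm_le_iff_of_nonneg (by norm_num)]
      intro i
      rw [Real.norm_eq_abs, abs_le]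
      constructor <;> (simp only [myPt]; split_ifs <;> nlinarith)
    have hmem : (1 : ℝ) ∈ (fun x : Fin n → ℝ => ‖x‖) '' segment ℝ (myPt n k ε 0) (myPt n k ε 1) := by
      refine ⟨myPt n k ε 0, left_mem_segment ℝ _ _, ?_⟩
      have h1 : ‖myPt n k ε 0‖ ≤ 1 := by
        rw [pi_norm_le_iff_of_nonneg (by norm_num)]
        intro i
        rw [Real.norm_eq_abs, abs_le]
        constructor <;> (simp only [myPt]; split_ifs <;> nlinarith)
      have h2 : (1 : ℝ) ≤ ‖myPt n k ε 0‖ := by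
        have h3 := norm_le_pi_norm (myPt n k ε 0) ⟨k - 1, h1n⟩
        rw [myPt_apply_km1 n k ε 0 hk3 h1n] at h3
        rw [show (1:ℝ) - 0/3 = 1 by norm_num] at h3
        simpa using h3
      simp only []
      linarith
    exact le_antisymm (csSup_le ⟨1, hmem⟩ hub) (le_csSup ⟨1, hub⟩ hmem)
  · -- main bound
    intro c hc xstar hstar xc hxc hmin
    have hstar_eq : xstar = myPt n k ε 0 := by
      obtain ⟨s, hs0, hs1, rfl⟩ := (mem_segment_iff n k ε xstar).1 hstar.1
      have hmono_s := myPt_monotone hk3 hε hε8 hs0 hs1 (n := n)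
      have hmono_0 := myPt_monotone hk3 hε hε8 le_rfl zero_le_one (n := n)
      rcases hstar.2 (myPt n k ε 0) (left_mem_segment ℝ _ _) with heq | ⟨i, hj, hi⟩
      · exact heq.symm
      · rw [sortedComp_of_monotone hmono_s, sortedComp_of_monotone hmono_0] at hi
        by_cases hival : (i : ℕ) = 0
        · exfalso
          have hieq : i = ⟨0, h0n⟩ := Fin.ext hival
          rw [hieq, myPt_apply_zero n k ε s h0n, myPt_apply_zero n k ε 0 h0n] at hi
          nlinarith
        · have hlt : (⟨0, h0n⟩ : Fin n) < i := by
            rw [Fin.lt_def]; exact Nat.pos_of_ne_zero hival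
          have heq0 := hj ⟨0, h0n⟩ hlt
          rw [sortedComp_of_monotone hmono_s, sortedComp_of_monotone hmono_0,
            myPt_apply_zero n k ε s h0n, myPt_apply_zero n k ε 0 h0n] at heq0
          have hs : s = 0 := by
            have hz : ε * s = 0 := by nlinarith
            rcases mul_eq_zero.1 hz with h | h
            · exact absurd h (ne_of_gt hε)
            · exact h
          rw [hs]
    obtain ⟨t, ht0, ht1, rfl⟩ := (mem_segment_iff n k ε xc).1 hxc
    set m : ℝ := min 1 (a / c) with hm
    have hm0 : 0 < m := lt_min one_pos (div_pos (by linarith) hc)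
    have hm1 : m ≤ 1 := min_le_left _ _
    have hcm : c * m ≤ a := by
      have h1 : m ≤ a / c := min_le_right _ _
      have h2 := mul_le_mul_of_nonneg_left h1 hc.le
      rwa [mul_div_cancel₀ a (ne_of_gt hc)] at h2
    have htm : m ≤ t := by
      by_contra hlt
      push_neg at hlt
      have h1 := hmin (myPt n k ε m) (myPt_mem_segment n k ε hm0.le hm1)
      have h2 : myPhi c ε m < myPhi c ε t :=
        myPhi_strictAntiOn hc ha hεd hm1 hcm ⟨ht0, hlt.le⟩ ⟨hm0.le, le_rfl⟩ hlt
      have h3 := expLoss_sub n k hk3 hkn c ε m t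
      linarith
    have hmono_t := myPt_monotone hk3 hε hε8 ht0 ht1 (n := n)
    have hmono_0 := myPt_monotone hk3 hε hε8 le_rfl zero_le_one (n := n)
    rw [hstar_eq, sortedComp_of_monotone hmono_t, sortedComp_of_monotone hmono_0,
      myPt_apply_km1 n k ε t hk3 h1n, myPt_apply_km1 n k ε 0 hk3 h1n]
    linarith
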